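/- Let A be a unital C*-algebra and v ∈ A a partial isometry (v·v*·v = v), and let v₁ = [[1 − v v*, v], [v*, 1 − v* v]] ∈ M₂(A). For t ≥ 0 define v₁(t) = (1/2)(e^{2i·arctan(t)}(v₁ − 1₂) + (v₁ + 1₂)). Then each v₁(t) is unitary in M₂(A), the map t ↦ v₁(t) is norm-continuous, v₁(0) = v₁ and v₁(t) → 1₂ in norm as t → ∞. Moreover, with e = [[1,0],[0,0]], one has the explicit formula e_v(t) := v₁(t)·e·v₁(t)* = [[1 − (1+t²)^{−1} v v* , −i t (1+t²)^{−1} v], [i t (1+t²)^{−1} v* , (1+t²)^{−1} v* v]], and e_v(t) is a projection (self-adjoint idempotent) in M₂(A) for every t ≥ 0. -/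

import Mathlib

open scoped Matrix

set_option maxHeartbeats 1000000

private theorem stmt1_mul_aux {B : Type*} [Ring B] [Algebra ℂ B]
    (w : B) (h1 : w * w = 1) (z z' : ℂ) (hzz : z * z' = 1) :
    ((2⁻¹ : ℂ) • (z • (w - 1) + (w + 1))) * ((2⁻¹ : ℂ) • (z' • (w - 1) + (w + 1))) = 1 := by
  have hA : (w-1)*(w-1) = (1-w)+(1-w) := by
    calc (w-1)*(w-1) = w*w - w - w + 1 := by noncomm_ring
    _ = (1-w)+(1-w) := by rw [h1]; abel
  have hB : (w-1)*(w+1) = 0 := by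
    calc (w-1)*(w+1) = w*w - 1 := by noncomm_ring
    _ = 0 := by rw [h1, sub_self]
  have hC : (w+1)*(w-1) = 0 := by
    calc (w+1)*(w-1) = w*w - 1 := by noncomm_ring
    _ = 0 := by rw [h1, sub_self]
  have hD : (w+1)*(w+1) = (1+w)+(1+w) := by
    calc (w+1)*(w+1) = w*w + w + w + 1 := by noncomm_ring
    _ = (1+w)+(1+w) := by rw [h1]; abel
  rw [smul_mul_smul_comm]
  generalize hq : w - 1 = q at hA hB hC
  generalize hp : w + 1 = p at hB hC hD
  have expand : (z • q + p) * (z' • q + p)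
      = (z * z') • (q * q) + z • (q * p) + z' • (p * q) + p * p := by
    rw [add_mul, mul_add, mul_add, smul_mul_assoc, smul_mul_assoc, mul_smul_comm,
      smul_smul, mul_smul_comm]
    abel
  rw [expand, hzz, hA, hB, hC, hD, one_smul, smul_zero, smul_zero]
  module

private theorem stmt1_formula_aux {A : Type*} [NormedRing A] [StarRing A] [CStarRing A]
    [NormedAlgebra ℂ A] [StarModule ℂ A] [CompleteSpace A]
    (v : A) (hv : v * star v * v = v) (t : ℝ) :
    letI a : ℂ := ((1:ℂ) + (t:ℂ)^2)⁻¹ * (1 + (t:ℂ) * Complex.I)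
    (!![1 - a•(v*star v), a•v; a•star v, 1 - a•(star v * v)] : Matrix (Fin 2) (Fin 2) A)
      * !![(1:A),0;0,0]
      * star !![1 - a•(v*star v), a•v; a•star v, 1 - a•(star v * v)] =
    !![1 - ((1 : ℂ) + (t : ℂ) ^ 2)⁻¹ • (v * star v),
         (-Complex.I * (t : ℂ) * ((1 : ℂ) + (t : ℂ) ^ 2)⁻¹) • v;
       (Complex.I * (t : ℂ) * ((1 : ℂ) + (t : ℂ) ^ 2)⁻¹) • star v,
         ((1 : ℂ) + (t : ℂ) ^ 2)⁻¹ • (star v * v)] := by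
  show _
  have hden : ((1:ℂ) + (t:ℂ)^2) ≠ 0 := by
    have h0 : (0:ℝ) < 1 + t^2 := by positivity
    have : ((1:ℂ) + (t:ℂ)^2) = ((1 + t^2 : ℝ) : ℂ) := by push_cast; ring
    rw [this]; exact_mod_cast h0.ne'
  have hvv : (v * star v) * (v * star v) = v * star v := by
    rw [← mul_assoc, hv]
  have hvvv : (v * star v) * v = v := hv
  have hsv : star v * (v * star v) = star v := by
    simpa [star_mul, mul_assoc] using congrArg star hv
  ext i j
  fin_cases i <;> fin_cases j <;>
    simp [Matrix.mul_apply, Fin.sum_univ_succ, Matrix.star_apply, star_sub, star_smul,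
      star_mul, mul_sub, sub_mul, smul_mul_assoc, mul_smul_comm, smul_smul,
      hvv, hvvv, hsv, mul_assoc] <;>
    match_scalars <;> field_simp <;> ring_nf <;> simp [Complex.I_sq] <;> try ring_nf

private theorem stmt1_exp_eq (t : ℝ) :
    Complex.exp (2 * Complex.I * (Real.arctan t : ℂ)) =
      2 * (((1:ℂ) + (t:ℂ)^2)⁻¹ * (1 + (t:ℂ) * Complex.I)) - 1 := by
  have h0 : (0:ℝ) < 1 + t^2 := by positivity
  have hc : Real.cos (2 * Real.arctan t) = (1 - t^2)/(1+t^2) := by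
    rw [Real.cos_two_mul, Real.cos_arctan, div_pow, one_pow, Real.sq_sqrt h0.le]
    field_simp; ring
  have hsn : Real.sin (2 * Real.arctan t) = 2*t/(1+t^2) := by
    have hss : Real.sqrt (1+t^2) * Real.sqrt (1+t^2) = 1 + t^2 := Real.mul_self_sqrt h0.le
    rw [Real.sin_two_mul, Real.sin_arctan, Real.cos_arctan]
    field_simp
    rw [Real.sq_sqrt h0.le]
  have he : (2 * Complex.I * (Real.arctan t : ℂ)) = ((2 * Real.arctan t : ℝ) : ℂ) * Complex.I := by
    push_cast; ring
  have hz0 : ((1:ℂ) + (t:ℂ)^2) ≠ 0 := by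
    have : ((1:ℂ) + (t:ℂ)^2) = ((1 + t^2 : ℝ) : ℂ) := by push_cast; ring
    rw [this]; exact_mod_cast h0.ne'
  rw [he, Complex.exp_mul_I, ← Complex.ofReal_cos, ← Complex.ofReal_sin, hc, hsn]
  push_cast
  field_simp
  ring

/-- For a partial isometry `v` in a unital C*-algebra, the path
`v₁(t) = ½(e^{2i·arctan t}(v₁ - 1) + (v₁ + 1))` consists of unitaries, is norm-continuous,
starts at `v₁` and tends to `1` at infinity; moreover `e_v(t) = v₁(t) e v₁(t)*` is given
by the explicit matrix formula and is a projection for every `t ≥ 0`. -/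
theorem stmt1 {A : Type*} [NormedRing A] [StarRing A] [CStarRing A]
    [NormedAlgebra ℂ A] [StarModule ℂ A] [CompleteSpace A]
    (v : A) (hv : v * star v * v = v)
    (v₁ : Matrix (Fin 2) (Fin 2) A)
    (hv₁ : v₁ = !![1 - v * star v, v; star v, 1 - star v * v])
    (v₁t : ℝ → Matrix (Fin 2) (Fin 2) A)
    (hv₁t : v₁t = fun t : ℝ =>
      (2⁻¹ : ℂ) • (Complex.exp (2 * Complex.I * (Real.arctan t : ℂ)) • (v₁ - 1) + (v₁ + 1)))
    (e : Matrix (Fin 2) (Fin 2) A) (he : e = !![(1 : A), 0; 0, 0])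
    (ev : ℝ → Matrix (Fin 2) (Fin 2) A)
    (hev : ev = fun t : ℝ =>
      !![1 - ((1 : ℂ) + (t : ℂ) ^ 2)⁻¹ • (v * star v),
           (-Complex.I * (t : ℂ) * ((1 : ℂ) + (t : ℂ) ^ 2)⁻¹) • v;
         (Complex.I * (t : ℂ) * ((1 : ℂ) + (t : ℂ) ^ 2)⁻¹) • star v,
           ((1 : ℂ) + (t : ℂ) ^ 2)⁻¹ • (star v * v)]) :
    (∀ t : ℝ, 0 ≤ t → star (v₁t t) * v₁t t = 1 ∧ v₁t t * star (v₁t t) = 1) ∧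
    ContinuousOn v₁t (Set.Ici (0 : ℝ)) ∧
    v₁t 0 = v₁ ∧
    Filter.Tendsto v₁t Filter.atTop (nhds 1) ∧
    (∀ t : ℝ, 0 ≤ t → v₁t t * e * star (v₁t t) = ev t) ∧
    (∀ t : ℝ, 0 ≤ t → star (ev t) = ev t ∧ ev t * ev t = ev t) := by
  subst hv₁ hv₁t he hev
  set w : Matrix (Fin 2) (Fin 2) A := !![1 - v * star v, v; star v, 1 - star v * v] with hw
  have hv' : star v * (v * star v) = star v := by
    simpa [star_mul, mul_assoc] using congrArg star hv
  have hv2 : v * (star v * v) = v := by rw [← mul_assoc, hv]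
  have h1 : w * w = 1 := by
    ext i j
    fin_cases i <;> fin_cases j <;>
      simp [hw, Matrix.mul_apply, Fin.sum_univ_succ, Matrix.one_apply, mul_sub, sub_mul,
        mul_assoc, hv', hv2]
  have hstarw : star w = w := by
    ext i j
    fin_cases i <;> fin_cases j <;> simp [hw, Matrix.star_apply, star_sub, star_mul]
  -- star of the exponential
  have hzstar : ∀ t : ℝ, star (Complex.exp (2 * Complex.I * (Real.arctan t : ℂ)))
      = Complex.exp (-(2 * Complex.I * (Real.arctan t : ℂ))) := by
    intro t
    rw [Complex.star_def, ← Complex.exp_conj]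
    congr 1
    simp only [map_mul, Complex.conj_I, Complex.conj_ofReal, map_ofNat]
    ring
  have hzz : ∀ t : ℝ, Complex.exp (2 * Complex.I * (Real.arctan t : ℂ)) *
      star (Complex.exp (2 * Complex.I * (Real.arctan t : ℂ))) = 1 := by
    intro t
    rw [hzstar, ← Complex.exp_add, add_neg_cancel, Complex.exp_zero]
  -- star of v₁t
  have hstaru : ∀ t : ℝ,
      star ((2⁻¹ : ℂ) • (Complex.exp (2 * Complex.I * (Real.arctan t : ℂ)) • (w - 1) + (w + 1)))
      = (2⁻¹ : ℂ) • ((star (Complex.exp (2 * Complex.I * (Real.arctan t : ℂ)))) • (w - 1)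
          + (w + 1)) := by
    intro t
    simp [star_smul, star_add, star_sub, hstarw]
  have hunit : ∀ t : ℝ,
      star ((2⁻¹ : ℂ) • (Complex.exp (2 * Complex.I * (Real.arctan t : ℂ)) • (w - 1) + (w + 1)))
        * ((2⁻¹ : ℂ) • (Complex.exp (2 * Complex.I * (Real.arctan t : ℂ)) • (w - 1) + (w + 1)))
        = 1 ∧
      ((2⁻¹ : ℂ) • (Complex.exp (2 * Complex.I * (Real.arctan t : ℂ)) • (w - 1) + (w + 1)))
        * star ((2⁻¹ : ℂ) • (Complex.exp (2 * Complex.I * (Real.arctan t : ℂ)) • (w - 1) + (w + 1)))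
        = 1 := by
    intro t
    rw [hstaru t]
    constructor
    · exact stmt1_mul_aux w h1 _ _ (by rw [mul_comm]; exact hzz t)
    · exact stmt1_mul_aux w h1 _ _ (hzz t)
  refine ⟨fun t _ => hunit t, ?_, ?_, ?_, ?_, ?_⟩
  · -- continuity
    apply Continuous.continuousOn
    have hinner : Continuous fun t : ℝ => (2 : ℂ) * Complex.I * ((Real.arctan t : ℝ) : ℂ) :=
      continuous_const.mul (Complex.continuous_ofReal.comp Real.continuous_arctan)
    fun_prop
  · -- value at 0
    simp only [Real.arctan_zero, Complex.ofReal_zero, mul_zero, Complex.exp_zero, one_smul]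
    module
  · -- limit at infinity
    have harc : Filter.Tendsto Real.arctan Filter.atTop (nhds (Real.pi/2)) :=
      Real.tendsto_arctan_atTop.mono_right nhdsWithin_le_nhds
    have hgc : Continuous (fun x : ℝ =>
        (2⁻¹ : ℂ) • (Complex.exp (2 * Complex.I * (x : ℂ)) • (w - 1) + (w + 1))) := by
      fun_prop
    have hcomp : Filter.Tendsto
        (fun t : ℝ => (2⁻¹ : ℂ) • (Complex.exp (2 * Complex.I * ((Real.arctan t : ℝ) : ℂ)) •
          (w - 1) + (w + 1)))
        Filter.atTop
        (nhds ((2⁻¹ : ℂ) • (Complex.exp (2 * Complex.I * ((Real.pi/2 : ℝ) : ℂ)) • (w - 1)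
          + (w + 1)))) := (hgc.tendsto _).comp harc
    have hval : ((2⁻¹ : ℂ) • (Complex.exp (2 * Complex.I * ((Real.pi/2 : ℝ) : ℂ)) • (w - 1)
        + (w + 1))) = (1 : Matrix (Fin 2) (Fin 2) A) := by
      have : (2 * Complex.I * ((Real.pi/2 : ℝ) : ℂ)) = (Real.pi : ℂ) * Complex.I := by
        push_cast; ring
      rw [this, Complex.exp_pi_mul_I]
      module
    rw [hval] at hcomp
    exact hcomp
  · -- the explicit formula
    intro t _
    dsimp only
    have hform : ((2⁻¹ : ℂ) • (Complex.exp (2 * Complex.I * (Real.arctan t : ℂ)) • (w - 1)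
        + (w + 1)))
        = !![1 - (((1:ℂ) + (t:ℂ)^2)⁻¹ * (1 + (t:ℂ) * Complex.I))•(v*star v),
              (((1:ℂ) + (t:ℂ)^2)⁻¹ * (1 + (t:ℂ) * Complex.I))•v;
            (((1:ℂ) + (t:ℂ)^2)⁻¹ * (1 + (t:ℂ) * Complex.I))•star v,
              1 - (((1:ℂ) + (t:ℂ)^2)⁻¹ * (1 + (t:ℂ) * Complex.I))•(star v * v)] := by
      rw [stmt1_exp_eq t]
      ext i j
      fin_cases i <;> fin_cases j <;>
        simp [hw, Matrix.one_apply, Matrix.smul_apply, Matrix.add_apply, Matrix.sub_apply] <;>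
        module
    rw [hform]
    exact stmt1_formula_aux v hv t
  · -- projection
    intro t ht
    dsimp only
    have hestar : star (!![(1:A),0;0,0] : Matrix (Fin 2) (Fin 2) A) = !![(1:A),0;0,0] := by
      ext i j
      fin_cases i <;> fin_cases j <;> simp [Matrix.star_apply]
    have hee : (!![(1:A),0;0,0] : Matrix (Fin 2) (Fin 2) A) * !![(1:A),0;0,0]
        = !![(1:A),0;0,0] := by
      ext i j
      fin_cases i <;> fin_cases j <;> simp [Matrix.mul_apply, Fin.sum_univ_succ]
    set u := ((2⁻¹ : ℂ) • (Complex.exp (2 * Complex.I * (Real.arctan t : ℂ)) • (w - 1) + (w + 1)))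
      with hu
    have hformula : u * !![(1:A),0;0,0] * star u
        = !![1 - ((1 : ℂ) + (t : ℂ) ^ 2)⁻¹ • (v * star v),
               (-Complex.I * (t : ℂ) * ((1 : ℂ) + (t : ℂ) ^ 2)⁻¹) • v;
             (Complex.I * (t : ℂ) * ((1 : ℂ) + (t : ℂ) ^ 2)⁻¹) • star v,
               ((1 : ℂ) + (t : ℂ) ^ 2)⁻¹ • (star v * v)] := by
      have hform : u = !![1 - (((1:ℂ) + (t:ℂ)^2)⁻¹ * (1 + (t:ℂ) * Complex.I))•(v*star v),
              (((1:ℂ) + (t:ℂ)^2)⁻¹ * (1 + (t:ℂ) * Complex.I))•v;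
            (((1:ℂ) + (t:ℂ)^2)⁻¹ * (1 + (t:ℂ) * Complex.I))•star v,
              1 - (((1:ℂ) + (t:ℂ)^2)⁻¹ * (1 + (t:ℂ) * Complex.I))•(star v * v)] := by
        rw [hu, stmt1_exp_eq t]
        ext i j
        fin_cases i <;> fin_cases j <;>
          simp [hw, Matrix.one_apply, Matrix.smul_apply, Matrix.add_apply, Matrix.sub_apply] <;>
          module
      rw [hform]
      exact stmt1_formula_aux v hv t
    rw [← hformula]
    have hu1 : star u * u = 1 := (hunit t).1
    constructor
    · calc star (u * !![(1:A),0;0,0] * star u)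
          = star (star u) * (star (!![(1:A),0;0,0]) * star u) := by
            rw [star_mul, star_mul]
        _ = u * !![(1:A),0;0,0] * star u := by
            rw [star_star, hestar, mul_assoc]
    · calc u * !![(1:A),0;0,0] * star u * (u * !![(1:A),0;0,0] * star u)
          = u * !![(1:A),0;0,0] * (star u * u) * !![(1:A),0;0,0] * star u := by
            noncomm_ring
        _ = u * (!![(1:A),0;0,0] * !![(1:A),0;0,0]) * star u := by
            rw [hu1, mul_one, mul_assoc u _ _]
        _ = u * !![(1:A),0;0,0] * star u := by rw [hee, mul_assoc]
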